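/- Consider the layer problem of Goldbeter's mitotic oscillator: f(X,M,C) = X M (1−X)(1−M) and N(X,M,C) = (M − 7/10, 6C/(1+2C) − 3/2, (1−X−C)/4), and let K = (0, 7/10, 1/2). Then f(K) = 0, (L_N f)(K) = 0, (L_N² f)(K) = 0, and (L_N³ f)(K) ≠ 0 (indeed it is positive), so K is a contact point of order two; moreover the 2×3 matrix with rows Df(K) = (21/100, 0, 0) and D(L_N f)(K) = (0, 21/100, 0) has rank 2. Hence K is a contact cusp. -/

import Mathlib

/-- The Lie derivative of a scalar function g along the vector field N:
(L_N g)(z) = Dg(z) N(z). Iterated Lie derivatives are given by `(lieD N)^[j] g`. -/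
noncomputable def lieD {n : ℕ} (N : (Fin n → ℝ) → (Fin n → ℝ))
    (g : (Fin n → ℝ) → ℝ) : (Fin n → ℝ) → ℝ :=
  fun z => fderiv ℝ g z (N z)

noncomputable def fF : (Fin 3 → ℝ) → ℝ := fun p => p 0 * p 1 * (1 - p 0) * (1 - p 1)

noncomputable def NF : (Fin 3 → ℝ) → (Fin 3 → ℝ) := fun p =>
  ![p 1 - 7 / 10, 6 * p 2 / (1 + 2 * p 2) - 3 / 2, (1 - p 0 - p 2) / 4]

noncomputable def KK : Fin 3 → ℝ := ![0, 7 / 10, 1 / 2]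

noncomputable def g1 : (Fin 3 → ℝ) → ℝ := fun z =>
  z 1 * (1 - z 1) * (1 - 2 * z 0) * (z 1 - 7 / 10)
    + z 0 * (1 - z 0) * (1 - 2 * z 1) * (6 * z 2 / (1 + 2 * z 2) - 3 / 2)

noncomputable def g2 : (Fin 3 → ℝ) → ℝ := fun z =>
  (z 1 * (1 - z 1) * (-2) * (z 1 - 7 / 10)
      + (1 - 2 * z 0) * (1 - 2 * z 1) * (6 * z 2 / (1 + 2 * z 2) - 3 / 2)) * (z 1 - 7 / 10)
  + (((1 - 2 * z 1) * (z 1 - 7 / 10) + z 1 * (1 - z 1)) * (1 - 2 * z 0)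
      + z 0 * (1 - z 0) * (-2) * (6 * z 2 / (1 + 2 * z 2) - 3 / 2))
        * (6 * z 2 / (1 + 2 * z 2) - 3 / 2)
  + (z 0 * (1 - z 0) * (1 - 2 * z 1) * (6 / (1 + 2 * z 2) ^ 2)) * ((1 - z 0 - z 2) / 4)

lemma fderiv_fF (z v : Fin 3 → ℝ) :
    fderiv ℝ fF z v =
      z 1 * (1 - z 1) * (1 - 2 * z 0) * v 0 + z 0 * (1 - z 0) * (1 - 2 * z 1) * v 1 := by
  have h0 := hasFDerivAt_apply (𝕜 := ℝ) (0 : Fin 3) z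
  have h1 := hasFDerivAt_apply (𝕜 := ℝ) (1 : Fin 3) z
  have H := ((h0.mul h1).mul (h0.const_sub 1)).mul (h1.const_sub 1)
  unfold fF
  rw [HasFDerivAt.fderiv (f := fun p : Fin 3 → ℝ => p 0 * p 1 * (1 - p 0) * (1 - p 1)) H]
  simp [ContinuousLinearMap.proj_apply]
  ring

lemma hasFDerivAt_g1 (z : Fin 3 → ℝ) (hz : 1 + 2 * z 2 ≠ 0) :
    ∃ L : (Fin 3 → ℝ) →L[ℝ] ℝ, HasFDerivAt g1 L z ∧ ∀ v,
      L v = (z 1 * (1 - z 1) * (-2) * (z 1 - 7 / 10)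
          + (1 - 2 * z 0) * (1 - 2 * z 1) * (6 * z 2 / (1 + 2 * z 2) - 3 / 2)) * v 0
        + (((1 - 2 * z 1) * (z 1 - 7 / 10) + z 1 * (1 - z 1)) * (1 - 2 * z 0)
          + z 0 * (1 - z 0) * (-2) * (6 * z 2 / (1 + 2 * z 2) - 3 / 2)) * v 1
        + (z 0 * (1 - z 0) * (1 - 2 * z 1) * (6 / (1 + 2 * z 2) ^ 2)) * v 2 := by
  have h0 := hasFDerivAt_apply (𝕜 := ℝ) (0 : Fin 3) z
  have h1 := hasFDerivAt_apply (𝕜 := ℝ) (1 : Fin 3) z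
  have h2 := hasFDerivAt_apply (𝕜 := ℝ) (2 : Fin 3) z
  have hd := ((hasDerivAt_id (z 2)).const_mul 6).div
      (((hasDerivAt_id (z 2)).const_mul 2).const_add 1) hz
  have hq := (hd.comp_hasFDerivAt z h2).sub_const (3 / 2 : ℝ)
  have H := (((h1.mul (h1.const_sub 1)).mul ((h0.const_mul 2).const_sub 1)).mul
      (h1.sub_const (7 / 10))).add
    (((h0.mul (h0.const_sub 1)).mul ((h1.const_mul 2).const_sub 1)).mul hq)
  refine ⟨_, H, fun v => ?_⟩
  simp [ContinuousLinearMap.proj_apply, id]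
  field_simp
  ring

lemma lieD_fF : lieD NF fF = g1 := by
  funext z
  show fderiv ℝ fF z (NF z) = g1 z
  rw [fderiv_fF]
  simp [NF, g1]

lemma lieD_g1_eq (z : Fin 3 → ℝ) (hz : 1 + 2 * z 2 ≠ 0) : lieD NF g1 z = g2 z := by
  obtain ⟨L, hL, happ⟩ := hasFDerivAt_g1 z hz
  show fderiv ℝ g1 z (NF z) = g2 z
  rw [hL.fderiv, happ]
  simp [NF, g2]

lemma hz_KK : 1 + 2 * KK 2 ≠ 0 := by rw [show KK 2 = 1 / 2 from rfl]; norm_num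

lemma hasFDerivAt_g2 :
    ∃ L : (Fin 3 → ℝ) →L[ℝ] ℝ, HasFDerivAt g2 L KK ∧ L (NF KK) = 63 / 1600 := by
  have hz := hz_KK
  have h0 := hasFDerivAt_apply (𝕜 := ℝ) (0 : Fin 3) KK
  have h1 := hasFDerivAt_apply (𝕜 := ℝ) (1 : Fin 3) KK
  have h2 := hasFDerivAt_apply (𝕜 := ℝ) (2 : Fin 3) KK
  have hd := ((hasDerivAt_id (KK 2)).const_mul 6).div
      (((hasDerivAt_id (KK 2)).const_mul 2).const_add 1) hz
  have hq := (hd.comp_hasFDerivAt KK h2).sub_const (3 / 2 : ℝ)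
  have hd2 := (hasDerivAt_const (KK 2) (6 : ℝ)).div
      ((((hasDerivAt_id (KK 2)).const_mul 2).const_add 1).pow 2) (pow_ne_zero 2 hz)
  have hr := hd2.comp_hasFDerivAt KK h2
  have a := h1.mul (h1.const_sub 1)
  have b0 := (h0.const_mul (2:ℝ)).const_sub 1
  have b1 := (h1.const_mul (2:ℝ)).const_sub 1
  have c := h1.sub_const (7 / 10 : ℝ)
  have e := h0.mul (h0.const_sub 1)
  have T1 := (((a.mul_const (-2 : ℝ)).mul c).add ((b0.mul b1).mul hq)).mul c
  have T2 := ((((b1.mul c).add a).mul b0).add ((e.mul_const (-2 : ℝ)).mul hq)).mul hq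
  have T3 := ((e.mul b1).mul hr).mul (((h0.const_sub 1).sub h2).mul_const ((4:ℝ)⁻¹))
  have H := (T1.add T2).add T3
  refine ⟨_, H, ?_⟩
  simp [ContinuousLinearMap.proj_apply, id, NF, KK]
  norm_num

lemma fderiv_lieD2 : fderiv ℝ (lieD NF (lieD NF fF)) KK (NF KK) = 63 / 1600 := by
  rw [lieD_fF]
  have hev : ∀ᶠ w in nhds KK, 1 + 2 * w 2 ≠ 0 := by
    have hc : ContinuousAt (fun w : Fin 3 → ℝ => 1 + 2 * w 2) KK :=
      (continuous_const.add (continuous_const.mul (continuous_apply 2))).continuousAt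
    exact hc.eventually_ne hz_KK
  have heq : lieD NF g1 =ᶠ[nhds KK] g2 := hev.mono fun w hw => lieD_g1_eq w hw
  rw [heq.fderiv_eq]
  obtain ⟨L, hL, happ⟩ := hasFDerivAt_g2
  rw [hL.fderiv]; exact happ


/-- For Goldbeter's mitotic oscillator layer problem and
K = (0, 7/10, 1/2): f(K) = L_N f(K) = L_N² f(K) = 0 and L_N³ f(K) ≠ 0 (indeed it is
positive), so K is a contact point of order two; moreover the 2×3 matrix with rows
Df(K) = (21/100, 0, 0) and D(L_N f)(K) = (0, 21/100, 0) has rank 2.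
Hence K is a contact cusp. -/
theorem mitotic_oscillator_cusp
    (f : (Fin 3 → ℝ) → ℝ)
    (hf : f = fun p => p 0 * p 1 * (1 - p 0) * (1 - p 1))
    (N : (Fin 3 → ℝ) → (Fin 3 → ℝ))
    (hN : N = fun p => ![p 1 - 7 / 10,
      6 * p 2 / (1 + 2 * p 2) - 3 / 2, (1 - p 0 - p 2) / 4])
    (K : Fin 3 → ℝ) (hK : K = ![0, 7 / 10, 1 / 2]) :
    f K = 0 ∧ lieD N f K = 0 ∧ (lieD N)^[2] f K = 0 ∧
      ((lieD N)^[3] f K ≠ 0 ∧ 0 < (lieD N)^[3] f K) ∧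
      (fun i => fderiv ℝ f K (Pi.single i 1)) = ![21 / 100, 0, 0] ∧
      (fun i => fderiv ℝ (lieD N f) K (Pi.single i 1)) = ![0, 21 / 100, 0] ∧
      (Matrix.of ![fun i => fderiv ℝ f K (Pi.single i 1),
        fun i => fderiv ℝ (lieD N f) K (Pi.single i 1)]).rank = 2 := by
  have hf' : f = fF := hf
  have hN' : N = NF := hN
  have hK' : K = KK := hK
  subst hf' hN' hK'
  have h2eq : (lieD NF)^[2] fF = lieD NF (lieD NF fF) := rfl
  have h3eq : (lieD NF)^[3] fF = lieD NF (lieD NF (lieD NF fF)) := rfl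
  have hpos : (0:ℝ) < (lieD NF)^[3] fF KK := by
    rw [h3eq]
    show (0:ℝ) < fderiv ℝ (lieD NF (lieD NF fF)) KK (NF KK)
    rw [fderiv_lieD2]; norm_num
  obtain ⟨L1, hL1, happ1⟩ := hasFDerivAt_g1 KK hz_KK
  have row1 : (fun i => fderiv ℝ fF KK (Pi.single i 1)) = ![21 / 100, 0, 0] := by
    funext i
    fin_cases i <;>
      · simp [fderiv_fF, KK, Pi.single_apply]; try norm_num
  have row2 : (fun i => fderiv ℝ (lieD NF fF) KK (Pi.single i 1)) = ![0, 21 / 100, 0] := by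
    funext i
    rw [lieD_fF, hL1.fderiv]
    fin_cases i <;>
      · simp [happ1, KK, Pi.single_apply]; try norm_num
  refine ⟨?_, ?_, ?_, ⟨ne_of_gt hpos, hpos⟩, row1, row2, ?_⟩
  · simp [fF, KK]
  · show fderiv ℝ fF KK (NF KK) = 0
    rw [fderiv_fF]; simp [NF, KK]
  · rw [h2eq]
    show fderiv ℝ (lieD NF fF) KK (NF KK) = 0
    rw [lieD_fF, hL1.fderiv, happ1]
    simp [NF, KK]; norm_num
  · rw [row1, row2]
    have hsurj : Function.Surjective
        (Matrix.of ![![(21:ℝ)/100, 0, 0], ![0, 21/100, 0]]).mulVecLin := by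
      intro y
      refine ⟨![100/21 * y 0, 100/21 * y 1, 0], ?_⟩
      funext i
      fin_cases i <;>
        simp [Matrix.mulVecLin_apply, Matrix.mulVec, dotProduct,
          Fin.sum_univ_three] <;> ring
    rw [Matrix.rank, LinearMap.range_eq_top.2 hsurj]
    simp
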